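/- For the increasingly sorted prior q and the optimal mechanism K produced by the recursive algorithm, the diagonal entries are non-decreasing: K_{11} ≤ K_{22} ≤ … ≤ K_{nn}. In particular min_i K_{ii} = K_{11} = e^ε q_min/(e^ε q_min + 1 − q_min). -/

import Mathlib

open Finset

/-- The optimal mechanism produced by the recursive algorithm of the paper, for a prior on
`Fin (n+2)` and privacy parameter `ε`. The base case is the optimal binary mechanism, and
the recursive step fills in the first row/column and scales the recursively computed block. -/
noncomputable def optK : (n : ℕ) → (Fin (n + 2) → ℝ) → ℝ → Matrix (Fin (n + 2)) (Fin (n + 2)) ℝ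
  | 0, q, ε =>
    !![Real.exp ε * q 0 / (Real.exp ε * q 0 + 1 - q 0),
        (1 - q 0) / (Real.exp ε * q 0 + 1 - q 0);
      q 0 / (Real.exp ε * q 0 + 1 - q 0),
        ((Real.exp ε - 1) * q 0 + 1 - q 0) / (Real.exp ε * q 0 + 1 - q 0)]
  | n + 1, q, ε =>
    Matrix.of fun i j =>
      Fin.cases
        (Fin.cases (Real.exp ε * q 0 / (Real.exp ε * q 0 + 1 - q 0))
          (fun j' => q j'.succ / (Real.exp ε * q 0 + 1 - q 0)) j)
        (fun i' =>
          Fin.cases (q 0 / (Real.exp ε * q 0 + 1 - q 0))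
            (fun j' => (1 - q 0 / (Real.exp ε * q 0 + 1 - q 0)) *
              optK n (fun k => q k.succ / (1 - q 0)) ε i' j') j)
        i

/-- For an increasingly sorted positive prior `q`, the diagonal entries of the mechanism
produced by the recursive algorithm are non-decreasing; in particular the minimum diagonal
entry is `K_11 = e^ε q_min/(e^ε q_min + 1 - q_min)`. -/
theorem optK_diag_monotone (n : ℕ) (ε : ℝ) (hε : 0 ≤ ε)
    (q : Fin (n + 2) → ℝ) (hqpos : ∀ i, 0 < q i) (hqmono : Monotone q)
    (hqsum : ∑ i, q i = 1) :
    Monotone (fun i => optK n q ε i i) ∧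
    optK n q ε 0 0 = Real.exp ε * q 0 / (Real.exp ε * q 0 + 1 - q 0) ∧
    (∀ i, optK n q ε 0 0 ≤ optK n q ε i i) := by
  induction n with
  | zero =>
    have ha : (1:ℝ) ≤ Real.exp ε := Real.one_le_exp hε
    have hq01 : q 0 ≤ q 1 := hqmono (by decide : (0:Fin 2) ≤ 1)
    have hsum : q 0 + q 1 = 1 := by simpa [Fin.sum_univ_two] using hqsum
    have hD : 0 < Real.exp ε * q 0 + 1 - q 0 := by
      nlinarith [mul_nonneg (sub_nonneg.2 ha) (hqpos 0).le]
    have h00 : optK 0 q ε 0 0 = Real.exp ε * q 0 / (Real.exp ε * q 0 + 1 - q 0) := by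
      simp [optK]
    have h11 : optK 0 q ε 1 1 =
        ((Real.exp ε - 1) * q 0 + 1 - q 0) / (Real.exp ε * q 0 + 1 - q 0) := by
      simp [optK]
    have hkey : optK 0 q ε 0 0 ≤ optK 0 q ε 1 1 := by
      rw [h00, h11]
      gcongr
      linarith
    have hmono : Monotone (fun i : Fin 2 => optK 0 q ε i i) := by
      rw [Fin.monotone_iff_le_succ]
      intro i
      fin_cases i
      simpa using hkey
    exact ⟨hmono, h00, fun i => hmono (Fin.zero_le i)⟩
  | succ n ih =>
    have ha : (1:ℝ) ≤ Real.exp ε := Real.one_le_exp hε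
    set a := Real.exp ε with ha_def
    have hp := hqpos 0
    set p := q 0 with hp_def
    have hD : 0 < a * p + 1 - p := by
      nlinarith [mul_nonneg (sub_nonneg.2 ha) hp.le]
    set D := a * p + 1 - p with hD_def
    -- the tail sums to 1 - p and is positive
    have hsum' : p + ∑ i : Fin (n + 2), q i.succ = 1 := by
      rw [← hqsum]
      exact (Fin.sum_univ_succ q).symm
    have htail_pos : 0 < ∑ i : Fin (n + 2), q i.succ :=
      Finset.sum_pos (fun i _ => hqpos i.succ) Finset.univ_nonempty
    have h1p : 0 < 1 - p := by linarith
    set q' : Fin (n + 2) → ℝ := fun k => q k.succ / (1 - p) with hq'_def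
    have hq'pos : ∀ i, 0 < q' i := fun i => div_pos (hqpos i.succ) h1p
    have hq'mono : Monotone q' := fun i j hij =>
      div_le_div_of_nonneg_right (hqmono (Fin.succ_le_succ_iff.2 hij)) h1p.le
    have hq'sum : ∑ i, q' i = 1 := by
      rw [hq'_def]
      rw [← Finset.sum_div]
      field_simp
      linarith
    obtain ⟨ihmono, ih00, _⟩ := ih q' hq'pos hq'mono hq'sum
    set m := 1 - p / D with hm_def
    have hm : 0 ≤ m := by
      rw [hm_def, sub_nonneg, div_le_one hD]
      nlinarith [mul_nonneg (sub_nonneg.2 ha) hp.le]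
    -- entries of the diagonal
    have hdiag0 : optK (n + 1) q ε 0 0 = a * p / D := by
      simp [optK]
      rfl
    have hdiagsucc : ∀ i : Fin (n + 2),
        optK (n + 1) q ε i.succ i.succ = m * optK n q' ε i i := by
      intro i
      simp [optK, hq'_def, hm_def, hD_def]
      rfl
    -- key inequality: K₀₀ ≤ K₁₁
    set t := q' 0 with ht_def
    have ht_pos : 0 < t := hq'pos 0
    have hden2 : 0 < a * t + 1 - t := by
      nlinarith [mul_nonneg (sub_nonneg.2 ha) ht_pos.le]
    have hpq1 : p ≤ t * (1 - p) := by
      have h01 : p ≤ q 1 := hqmono (Fin.zero_le 1)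
      have : t * (1 - p) = q 1 := by
        rw [ht_def, hq'_def]
        field_simp
        rfl
      linarith [this ▸ h01]
    have hcore : a * p * (a * t + 1 - t) ≤ (D - p) * (a * t) := by
      have h := mul_nonneg (Real.exp_pos ε).le (sub_nonneg.2 hpq1)
      rw [hD_def]
      nlinarith [h]
    have hkey : a * p / D ≤ m * (a * t / (a * t + 1 - t)) := by
      have hm' : m = (D - p) / D := by
        rw [hm_def, sub_div, div_self hD.ne']
      rw [hm', div_mul_div_comm, div_le_div_iff₀ hD (mul_pos hD hden2)]
      nlinarith [mul_le_mul_of_nonneg_left hcore hD.le]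
    have hfirst : optK (n + 1) q ε 0 0 ≤ optK (n + 1) q ε 1 1 := by
      have h1 : (1 : Fin (n + 3)) = (0 : Fin (n + 2)).succ := rfl
      rw [hdiag0, h1, hdiagsucc 0, ih00]
      exact hkey
    have hmono : Monotone (fun i : Fin (n + 3) => optK (n + 1) q ε i i) := by
      rw [Fin.monotone_iff_le_succ]
      intro i
      induction i using Fin.cases with
      | zero => simpa using hfirst
      | succ j =>
        have h1 : (j.succ).castSucc = (j.castSucc).succ := (Fin.succ_castSucc j).symm
        simp only [h1, hdiagsucc]
        exact mul_le_mul_of_nonneg_left (ihmono (Fin.castSucc_le_succ j)) hm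
    exact ⟨hmono, hdiag0, fun i => hmono (Fin.zero_le i)⟩
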